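/- Let T_1, ..., T_M be operators on ℝ^d, each α-averaged for some α ∈ (0,1], let λ ∈ (0, 1/α), let H ≥ 1 be an integer, and set 𝒯̃_λ = (1/M) Σ_{i=1}^M (λT_i + (1−λ)Id)^H and ζ = Hαλ / (1 + (H−1)αλ). Let x† be a fixed point of 𝒯̃_λ and let (y_n) be defined by y_{n+1} = 𝒯̃_λ(y_n) from an arbitrary y_0 ∈ ℝ^d. Then the squared differences of successive iterates are summable: Σ_{n∈ℕ} ‖y_{n+1} − y_n‖² ≤ (ζ/(1−ζ)) ‖y_0 − x†‖². -/

import Mathlib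

variable {E : Type*} [NormedAddCommGroup E] [InnerProductSpace ℝ E]

def AvgIneq (β : ℝ) (U : E → E) : Prop :=
  ∀ x y : E, ‖U x - U y‖ ^ 2 + β * ‖(x - U x) - (y - U y)‖ ^ 2 ≤ ‖x - y‖ ^ 2

lemma convex_identity (μ : ℝ) (u v : E) :
    ‖μ • v + (1 - μ) • u‖ ^ 2 + μ * (1 - μ) * ‖u - v‖ ^ 2
      = μ * ‖v‖ ^ 2 + (1 - μ) * ‖u‖ ^ 2 := by
  simp only [← real_inner_self_eq_norm_sq, inner_add_add_self, inner_sub_sub_self,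
    real_inner_smul_left, real_inner_smul_right, real_inner_comm u v]
  ring

/-- An operator of the form μ•T' + (1-μ)•Id with T' nonexpansive satisfies AvgIneq (1-μ)/μ. -/
lemma avg_of_form (μ : ℝ) (hμ0 : 0 < μ) (hμ1 : μ ≤ 1)
    (T' U : E → E) (hne : ∀ x y, ‖T' x - T' y‖ ≤ ‖x - y‖)
    (hU : ∀ x, U x = μ • T' x + (1 - μ) • x) :
    AvgIneq ((1 - μ) / μ) U := by
  intro x y
  set u := x - y
  set v := T' x - T' y
  have h1 : U x - U y = μ • v + (1 - μ) • u := by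
    simp only [hU, u, v]; module
  have h2 : (x - U x) - (y - U y) = μ • (u - v) := by
    simp only [hU, u, v]; module
  rw [h1, h2, norm_smul]
  have hv : ‖v‖ ≤ ‖u‖ := hne x y
  have hid := convex_identity μ u v
  have : ((1 - μ) / μ) * (‖μ‖ * ‖u - v‖) ^ 2 = μ * (1 - μ) * ‖u - v‖ ^ 2 := by
    rw [Real.norm_eq_abs, abs_of_pos hμ0]; field_simp
  rw [this]
  have hv2 : ‖v‖ ^ 2 ≤ ‖u‖ ^ 2 := by nlinarith [norm_nonneg v, norm_nonneg u]
  nlinarith [hid, mul_le_mul_of_nonneg_left hv2 hμ0.le]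

/-- Composition. -/
lemma avg_comp {β₁ β₂ : ℝ} (hβ₁ : 0 < β₁) (hβ₂ : 0 < β₂) {U V : E → E}
    (hU : AvgIneq β₁ U) (hV : AvgIneq β₂ V) :
    AvgIneq (β₁ * β₂ / (β₁ + β₂)) (V ∘ U) := by
  intro x y
  have h1 := hU x y
  have h2 := hV (U x) (U y)
  set a := (x - U x) - (y - U y)
  set b := (U x - V (U x)) - (U y - V (U y))
  have hab : (x - V (U x)) - (y - V (U y)) = a + b := by simp only [a, b]; abel
  have key : β₁ * β₂ / (β₁ + β₂) * ‖a + b‖ ^ 2 ≤ β₁ * ‖a‖ ^ 2 + β₂ * ‖b‖ ^ 2 := by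
    have htri : ‖a + b‖ ≤ ‖a‖ + ‖b‖ := norm_add_le a b
    have hs : 0 < β₁ + β₂ := by linarith
    rw [div_mul_eq_mul_div, div_le_iff₀ hs]
    have htri2 : ‖a + b‖ ^ 2 ≤ (‖a‖ + ‖b‖) ^ 2 := by
      nlinarith [norm_nonneg (a + b), norm_nonneg a, norm_nonneg b]
    nlinarith [htri2, sq_nonneg (β₁ * ‖a‖ - β₂ * ‖b‖), mul_pos hβ₁ hβ₂]
  simp only [Function.comp_apply, hab]
  linarith

/-- Iteration. -/
lemma avg_iterate {β : ℝ} (hβ : 0 < β) {U : E → E} (hU : AvgIneq β U) :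
    ∀ k : ℕ, 1 ≤ k → AvgIneq (β / k) (U^[k]) := by
  intro k hk
  induction k with
  | zero => omega
  | succ n ih =>
    rcases Nat.eq_zero_or_pos n with rfl | hn
    · simpa using hU
    · have ihn := ih hn
      have hnR : (0:ℝ) < (n:ℝ) := by exact_mod_cast hn
      have hβn : 0 < β / n := by positivity
      have hcomp := avg_comp hβn hβ ihn hU
      have heq : β / n * β / (β / n + β) = β / ((n:ℕ) + 1 : ℕ) := by
        push_cast
        have hd : β / ↑n + β ≠ 0 := by positivity
        field_simp
        ring
      rw [Function.iterate_succ']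
      rw [show ((n+1 : ℕ):ℝ) = (((n:ℕ) + 1 : ℕ) : ℝ) from rfl, ← heq]
      exact hcomp

lemma sq_norm_avg_le (M : ℕ) (hM : 0 < M) (v : Fin M → E) :
    ‖(M:ℝ)⁻¹ • ∑ i, v i‖ ^ 2 ≤ (M:ℝ)⁻¹ * ∑ i, ‖v i‖ ^ 2 := by
  have hMR : (0:ℝ) < M := by exact_mod_cast hM
  have h1 : ‖∑ i, v i‖ ≤ ∑ i, ‖v i‖ := norm_sum_le _ _
  have h2 : (∑ i, ‖v i‖) ^ 2 ≤ (M:ℝ) * ∑ i, ‖v i‖ ^ 2 := by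
    simpa using sq_sum_le_card_mul_sum_sq (s := (Finset.univ : Finset (Fin M)))
      (f := fun i => ‖v i‖)
  have h3 : ‖∑ i, v i‖ ^ 2 ≤ (M:ℝ) * ∑ i, ‖v i‖ ^ 2 := by
    nlinarith [norm_nonneg (∑ i, v i),
      Finset.sum_nonneg (fun i (_ : i ∈ Finset.univ) => norm_nonneg (v i))]
  rw [norm_smul, Real.norm_eq_abs, abs_of_nonneg (by positivity : (0:ℝ) ≤ (M:ℝ)⁻¹)]
  calc ((M:ℝ)⁻¹ * ‖∑ i, v i‖) ^ 2 = (M:ℝ)⁻¹ * (M:ℝ)⁻¹ * ‖∑ i, v i‖ ^ 2 := by ring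
    _ ≤ (M:ℝ)⁻¹ * (M:ℝ)⁻¹ * ((M:ℝ) * ∑ i, ‖v i‖ ^ 2) := by
        exact mul_le_mul_of_nonneg_left h3 (by positivity)
    _ = (M:ℝ)⁻¹ * ∑ i, ‖v i‖ ^ 2 := by field_simp

lemma avg_mean {β : ℝ} (hβ : 0 ≤ β) (M : ℕ) (hM : 0 < M) (U : Fin M → E → E)
    (hU : ∀ i, AvgIneq β (U i)) (S : E → E) (hS : ∀ x, S x = (M:ℝ)⁻¹ • ∑ i, U i x) :
    AvgIneq β S := by
  intro x y
  have hMR : (0:ℝ) < M := by exact_mod_cast hM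
  have h1 : S x - S y = (M:ℝ)⁻¹ • ∑ i, (U i x - U i y) := by
    simp [hS, Finset.sum_sub_distrib, smul_sub]
  have h2 : (x - S x) - (y - S y) = (M:ℝ)⁻¹ • ∑ i, ((x - U i x) - (y - U i y)) := by
    simp only [hS, Finset.sum_sub_distrib, smul_sub, Finset.sum_const,
      Finset.card_univ, Fintype.card_fin, ← Nat.cast_smul_eq_nsmul ℝ, smul_smul,
      inv_mul_cancel₀ hMR.ne', one_smul]
  have hv := sq_norm_avg_le M hM (fun i => U i x - U i y)
  have hw := sq_norm_avg_le M hM (fun i => (x - U i x) - (y - U i y))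
  have hsum : (∑ i, ‖U i x - U i y‖ ^ 2) + β * ∑ i, ‖(x - U i x) - (y - U i y)‖ ^ 2
      ≤ (M:ℝ) * ‖x - y‖ ^ 2 := by
    have := Finset.sum_le_sum (fun i (_ : i ∈ Finset.univ) => hU i x y)
    simpa [Finset.sum_add_distrib, Finset.mul_sum, Finset.sum_const, Finset.card_univ,
      nsmul_eq_mul] using this
  rw [h1, h2]
  have hkey : (M:ℝ)⁻¹ * (∑ i, ‖U i x - U i y‖ ^ 2)
      + β * ((M:ℝ)⁻¹ * ∑ i, ‖(x - U i x) - (y - U i y)‖ ^ 2) ≤ ‖x - y‖ ^ 2 := by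
    calc (M:ℝ)⁻¹ * (∑ i, ‖U i x - U i y‖ ^ 2)
        + β * ((M:ℝ)⁻¹ * ∑ i, ‖(x - U i x) - (y - U i y)‖ ^ 2)
        = (M:ℝ)⁻¹ * ((∑ i, ‖U i x - U i y‖ ^ 2)
            + β * ∑ i, ‖(x - U i x) - (y - U i y)‖ ^ 2) := by ring
      _ ≤ (M:ℝ)⁻¹ * ((M:ℝ) * ‖x - y‖ ^ 2) := mul_le_mul_of_nonneg_left hsum (by positivity)
      _ = ‖x - y‖ ^ 2 := by field_simp
  have hw' := mul_le_mul_of_nonneg_left hw hβ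
  linarith

/-- summability of the squared successive differences of the
iterates of 𝒯̃_λ, with bound (ζ/(1−ζ)) ‖y₀ − x†‖². -/
theorem stmt_2 (d M : ℕ) (hM : 0 < M)
    (T : Fin M → EuclideanSpace ℝ (Fin d) → EuclideanSpace ℝ (Fin d))
    (α : ℝ) (hα0 : 0 < α) (hα1 : α ≤ 1)
    (hT : ∀ i, ∃ T' : EuclideanSpace ℝ (Fin d) → EuclideanSpace ℝ (Fin d),
      (∀ x y, ‖T' x - T' y‖ ≤ ‖x - y‖) ∧ ∀ x, T i x = α • T' x + (1 - α) • x)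
    (l : ℝ) (hl0 : 0 < l) (hl1 : l < 1 / α)
    (H : ℕ) (hH : 1 ≤ H)
    (S : EuclideanSpace ℝ (Fin d) → EuclideanSpace ℝ (Fin d))
    (hS : ∀ x, S x = (M : ℝ)⁻¹ • ∑ i, (fun z => l • T i z + (1 - l) • z)^[H] x)
    (ζ : ℝ) (hζ : ζ = (H : ℝ) * α * l / (1 + ((H : ℝ) - 1) * α * l))
    (xd : EuclideanSpace ℝ (Fin d)) (hxd : S xd = xd)
    (y : ℕ → EuclideanSpace ℝ (Fin d)) (hy : ∀ n, y (n + 1) = S (y n)) :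
    Summable (fun n : ℕ => ‖y (n + 1) - y n‖ ^ 2) ∧
      ∑' n : ℕ, ‖y (n + 1) - y n‖ ^ 2 ≤ ζ / (1 - ζ) * ‖y 0 - xd‖ ^ 2 := by
  set μ : ℝ := α * l with hμ
  have hμ0 : 0 < μ := mul_pos hα0 hl0
  have hμ1 : μ < 1 := by
    have := (lt_div_iff₀' hα0).mp hl1
    simpa [hμ] using this
  have hH1 : (1:ℝ) ≤ (H:ℝ) := by exact_mod_cast hH
  have hHpos : (0:ℝ) < (H:ℝ) := by linarith
  -- each relaxed operator satisfies the averagedness inequality with β' = (1-μ)/μ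
  have hβ' : 0 < (1 - μ) / μ := div_pos (by linarith) hμ0
  have hAi : ∀ i, AvgIneq ((1 - μ) / μ) (fun z => l • T i z + (1 - l) • z) := by
    intro i
    obtain ⟨T', hne, heq⟩ := hT i
    exact avg_of_form μ hμ0 hμ1.le T' _ hne (fun x => by simp only [heq, hμ]; module)
  -- the H-fold iterates
  have hAit : ∀ i, AvgIneq ((1 - μ) / μ / H) ((fun z => l • T i z + (1 - l) • z)^[H]) :=
    fun i => avg_iterate hβ' (hAi i) H hH
  set κ : ℝ := (1 - μ) / μ / H with hκdef
  have hκ0 : 0 < κ := by positivity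
  -- S satisfies the averagedness inequality with κ
  have hAS : AvgIneq κ S := avg_mean hκ0.le M hM _ hAit S hS
  -- the per-step inequality
  have hstep : ∀ n, ‖y (n + 1) - xd‖ ^ 2 + κ * ‖y (n + 1) - y n‖ ^ 2 ≤ ‖y n - xd‖ ^ 2 := by
    intro n
    have h := hAS (y n) xd
    rw [hxd, ← hy n] at h
    have hres : (y n - y (n + 1)) - (xd - xd) = -(y (n + 1) - y n) := by abel
    rw [hres, norm_neg] at h
    exact h
  -- partial sums are bounded
  have hpart0 : ∀ N, κ * (∑ n ∈ Finset.range N, ‖y (n + 1) - y n‖ ^ 2) + ‖y N - xd‖ ^ 2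
      ≤ ‖y 0 - xd‖ ^ 2 := by
    intro N
    induction N with
    | zero => simp
    | succ n ih =>
      rw [Finset.sum_range_succ, mul_add]
      have := hstep n
      linarith
  have hpart : ∀ N, ∑ n ∈ Finset.range N, ‖y (n + 1) - y n‖ ^ 2 ≤ κ⁻¹ * ‖y 0 - xd‖ ^ 2 := by
    intro N
    have h0 := hpart0 N
    have hnn : 0 ≤ ‖y N - xd‖ ^ 2 := sq_nonneg _
    calc ∑ n ∈ Finset.range N, ‖y (n + 1) - y n‖ ^ 2
        ≤ ‖y 0 - xd‖ ^ 2 / κ := by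
          rw [le_div_iff₀ hκ0]; nlinarith
      _ = κ⁻¹ * ‖y 0 - xd‖ ^ 2 := by rw [div_eq_inv_mul]
  -- identify κ⁻¹ with ζ/(1-ζ)
  have hζeq : ζ / (1 - ζ) = κ⁻¹ := by
    have hal : α * l ≠ 0 := hμ0.ne'
    have h1al : 1 - α * l ≠ 0 := by rw [← hμ]; linarith
    have hD1 : 1 + ((H:ℝ) - 1) * α * l ≠ 0 := by
      have h' : (0:ℝ) ≤ ((H:ℝ) - 1) * α * l := by
        have : ((H:ℝ) - 1) * α * l = ((H:ℝ) - 1) * (α * l) := by ring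
        rw [this]
        exact mul_nonneg (by linarith) (by positivity)
      linarith
    have h1ζ : 1 - ζ = (1 - α * l) / (1 + ((H:ℝ) - 1) * α * l) := by
      rw [hζ, eq_div_iff hD1, sub_mul, div_mul_cancel₀ _ hD1]
      ring
    rw [h1ζ, hζ, hκdef, hμ]
    generalize 1 + ((H:ℝ) - 1) * α * l = D at hD1 ⊢
    field_simp [hD1]
  constructor
  · exact summable_of_sum_range_le (fun n => sq_nonneg _) hpart
  · have := Real.tsum_le_of_sum_range_le (fun n => sq_nonneg _) hpart
    rw [hζeq]
    exact this
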